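/- Fix n, d, s ∈ ℕ with n ≥ 1 and 3 ≤ s ≤ d. Assume n · log(e³s³/27) + log 2 ≤ (1/2) · log(2^s · C(d,s)). Then for every measurable estimator β̂ : ℝ^{n×d} × ℝ^n → ℝ^d, under the joint law in which β* is uniform on F₂(d,s) and X ∈ ℝ^{n×d} has i.i.d. entries uniform on {−1/√n, 1/√n} independent of β*, the probability that β̂(X, X·β*) ≠ β* is at least 1/2. -/

import Mathlib

open MeasureTheory ProbabilityTheory Real
open scoped ENNReal

/-- The two-point measure placing mass 1/2 on each of `-1/√n` and `1/√n`. -/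
noncomputable def twoPointEntry (n : ℕ) : Measure ℝ :=
  (1 / 2 : ℝ≥0∞) • Measure.dirac (-(1 / Real.sqrt n)) +
    (1 / 2 : ℝ≥0∞) • Measure.dirac (1 / Real.sqrt n)

/-- The restricted ensemble `F₂(d,s)`: `s`-sparse vectors with entries in `{-1, 1}`
on a support of size `s`. -/
def F2 (d s : ℕ) : Set (Fin d → ℝ) :=
  {β | ∃ S : Finset (Fin d), S.card = s ∧
    (∀ i ∈ S, β i = -1 ∨ β i = 1) ∧ ∀ i ∉ S, β i = 0}

lemma F2_finite (d s : ℕ) : (F2 d s).Finite := by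
  have hsub : F2 d s ⊆ Set.pi Set.univ (fun _ : Fin d => ({-1, 0, 1} : Set ℝ)) := by
    rintro β ⟨S, hcard, hpm, hz⟩ i _
    by_cases h : i ∈ S
    · rcases hpm i h with h1 | h1 <;> simp [h1]
    · simp [hz i h]
  exact (Set.Finite.pi fun _ =>
    (Set.finite_singleton _).insert _ |>.insert _).subset hsub

lemma F2_nonempty {d s : ℕ} (hsd : s ≤ d) : (F2 d s).Nonempty := by
  classical
  set S : Finset (Fin d) :=
    Finset.univ.map ⟨Fin.castLE hsd, Fin.castLE_injective hsd⟩ with hS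
  refine ⟨fun i => if i ∈ S then 1 else 0, S, ?_, ?_, ?_⟩
  · simp [hS]
  · intro i hi; right; simp [hi]
  · intro i hi; simp [hi]

lemma F2_count_ge (d s : ℕ) :
    ((2 ^ s * d.choose s : ℕ) : ℝ≥0∞) ≤ Measure.count (F2 d s) := by
  classical
  rw [Measure.count_apply_finite _ (F2_finite d s), Nat.cast_le]
  have key : Fintype.card (Σ S : {S : Finset (Fin d) // S.card = s}, (↥S.1 → Bool))
      ≤ ((F2_finite d s).toFinset).card := by
    rw [← Fintype.card_coe ((F2_finite d s).toFinset)]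
    have hmem : ∀ p : (Σ S : {S : Finset (Fin d) // S.card = s}, (↥S.1 → Bool)),
        (fun i => if h : i ∈ p.1.1 then (if p.2 ⟨i, h⟩ then (1:ℝ) else -1) else 0)
          ∈ (F2_finite d s).toFinset := by
      intro p
      rw [Set.Finite.mem_toFinset]
      refine ⟨p.1.1, p.1.2, ?_, ?_⟩
      · intro i hi
        simp only
        rw [dif_pos hi]
        by_cases h : p.2 ⟨i, hi⟩ <;> simp [h]
      · intro i hi; simp only; rw [dif_neg hi]
    refine Fintype.card_le_of_injective (fun p => ⟨_, hmem p⟩) ?_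
    rintro ⟨⟨S₁, h₁⟩, f₁⟩ ⟨⟨S₂, h₂⟩, f₂⟩ h
    have hfun := congrArg Subtype.val h
    simp only at hfun
    have hSS : S₁ = S₂ := by
      ext i
      constructor
      · intro hi
        by_contra hi2
        have := congrFun hfun i
        rw [dif_pos hi, dif_neg hi2] at this
        by_cases hb : f₁ ⟨i, hi⟩ <;> simp [hb] at this
      · intro hi
        by_contra hi2
        have := congrFun hfun i
        rw [dif_neg hi2, dif_pos hi] at this
        by_cases hb : f₂ ⟨i, hi⟩ <;> simp [hb] at this
    subst hSS
    have hff : f₁ = f₂ := by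
      funext ⟨i, hi⟩
      have := congrFun hfun i
      rw [dif_pos hi, dif_pos hi] at this
      by_cases hb1 : f₁ ⟨i, hi⟩ <;> by_cases hb2 : f₂ ⟨i, hi⟩ <;>
        simp only [hb1, hb2, if_true, if_false] at this ⊢ <;> try norm_num at this
    subst hff
    rfl
  calc 2 ^ s * d.choose s
      = Fintype.card (Σ S : {S : Finset (Fin d) // S.card = s}, (↥S.1 → Bool)) := by
        rw [Fintype.card_sigma]
        have : ∀ S : {S : Finset (Fin d) // S.card = s},
            Fintype.card (↥S.1 → Bool) = 2 ^ s := by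
          intro S
          rw [Fintype.card_fun]
          simp [S.2]
        rw [Finset.sum_congr rfl (fun S _ => this S)]
        simp [Fintype.card_finset_len, mul_comm]
    _ ≤ _ := key
lemma success_count_le (n d s : ℕ) (hn : 1 ≤ n)
    (est : (Fin n → Fin d → ℝ) × (Fin n → ℝ) → (Fin d → ℝ))
    (X : Fin n → Fin d → ℝ)
    (hX : ∀ i j, X i j = -(1 / Real.sqrt n) ∨ X i j = 1 / Real.sqrt n) :
    Measure.count (F2 d s ∩ {β | est (X, fun i => ∑ j, X i j * β j) = β})
      ≤ (((2 * s + 1) ^ n : ℕ) : ℝ≥0∞) := by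
  classical
  set A := F2 d s ∩ {β | est (X, fun i => ∑ j, X i j * β j) = β} with hA
  have hAfin : A.Finite := (F2_finite d s).subset Set.inter_subset_left
  rw [Measure.count_apply_finite _ hAfin, Nat.cast_le]
  have hc : (0:ℝ) < 1 / Real.sqrt n := by
    have : (0:ℝ) < Real.sqrt n := Real.sqrt_pos.2 (by exact_mod_cast hn)
    positivity
  set Vfin : Finset ℝ := (Finset.Icc (-(s:ℤ)) (s:ℤ)).image
    (fun k : ℤ => (k : ℝ) / Real.sqrt n) with hV
  have hval : ∀ β ∈ A, ∀ i, (∑ j, X i j * β j) ∈ Vfin := by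
    rintro β ⟨⟨S, hcard, hpm, hz⟩, -⟩ i
    have hsum : ∑ j, X i j * β j = ∑ j ∈ S, X i j * β j :=
      (Finset.sum_subset (Finset.subset_univ S)
        (fun j _ hj => by rw [hz j hj, mul_zero])).symm
    have hpm2 : ∀ j ∈ S, X i j * β j = 1 / Real.sqrt n ∨
        X i j * β j = -(1 / Real.sqrt n) := by
      intro j hj
      rcases hX i j with h1 | h1 <;> rcases hpm j hj with h2 | h2 <;>
        rw [h1, h2] <;> [left; right; right; left] <;> ring
    set σ : Fin d → ℤ := fun j => if X i j * β j = 1 / Real.sqrt n then 1 else -1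
      with hσ
    have hterm : ∀ j ∈ S, X i j * β j = (σ j : ℝ) * (1 / Real.sqrt n) := by
      intro j hj
      rcases hpm2 j hj with h | h
      · rw [hσ]; simp only [h, if_pos rfl]; norm_num
      · rw [hσ]; simp only
        rw [if_neg (by rw [h]; intro he; nlinarith), h]
        norm_num
    have hsum2 : ∑ j ∈ S, X i j * β j
        = ((∑ j ∈ S, σ j : ℤ) : ℝ) * (1 / Real.sqrt n) := by
      rw [Finset.sum_congr rfl hterm, ← Finset.sum_mul]
      push_cast
      ring
    have hk : |∑ j ∈ S, σ j| ≤ (s : ℤ) := by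
      calc |∑ j ∈ S, σ j| ≤ ∑ j ∈ S, |σ j| := Finset.abs_sum_le_sum_abs _ _
        _ ≤ ∑ j ∈ S, 1 := by
            refine Finset.sum_le_sum fun j _ => ?_
            simp only [hσ]; split_ifs <;> simp
        _ = (s : ℤ) := by rw [Finset.sum_const, hcard]; simp
    rw [hV, Finset.mem_image]
    refine ⟨∑ j ∈ S, σ j, Finset.mem_Icc.2 ⟨neg_le_of_abs_le hk, le_of_abs_le hk⟩, ?_⟩
    rw [hsum, hsum2]
    push_cast
    ring
  -- injection into (Fin n → Vfin)
  have hinj : Fintype.card (↥hAfin.toFinset) ≤ Fintype.card (Fin n → ↥Vfin) := by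
    refine Fintype.card_le_of_injective
      (fun β => fun i => ⟨∑ j, X i j * (β : Fin d → ℝ) j,
        hval β (hAfin.mem_toFinset.1 β.2) i⟩) ?_
    rintro ⟨β₁, hβ₁⟩ ⟨β₂, hβ₂⟩ h
    have hy : (fun i => ∑ j, X i j * β₁ j) = (fun i => ∑ j, X i j * β₂ j) :=
      funext fun i => congrArg Subtype.val (congrFun h i)
    have e1 : est (X, fun i => ∑ j, X i j * β₁ j) = β₁ :=
      (hAfin.mem_toFinset.1 hβ₁).2
    have e2 : est (X, fun i => ∑ j, X i j * β₂ j) = β₂ :=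
      (hAfin.mem_toFinset.1 hβ₂).2
    apply Subtype.ext
    show β₁ = β₂
    rw [← e1, ← e2, hy]
  rw [Fintype.card_coe] at hinj
  refine hinj.trans ?_
  rw [Fintype.card_fun]
  have hVcard : Vfin.card ≤ 2 * s + 1 := by
    refine (Finset.card_image_le).trans ?_
    rw [Int.card_Icc]
    omega
  calc (Fintype.card ↥Vfin) ^ Fintype.card (Fin n)
      = Vfin.card ^ n := by rw [Fintype.card_coe, Fintype.card_fin]
    _ ≤ (2 * s + 1) ^ n := Nat.pow_le_pow_left hVcard n
lemma numeric_bound (n d s : ℕ) (hs3 : 3 ≤ s) (hsd : s ≤ d)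
    (hbound : (n : ℝ) * Real.log (Real.exp 1 ^ 3 * (s : ℝ) ^ 3 / 27) + Real.log 2 ≤
      (1 / 2) * Real.log (2 ^ s * (d.choose s : ℝ))) :
    2 * (2 * s + 1) ^ n ≤ 2 ^ s * d.choose s := by
  have hs : (3:ℝ) ≤ (s:ℝ) := by exact_mod_cast hs3
  have hchoose : (1:ℝ) ≤ (d.choose s : ℝ) := by
    exact_mod_cast Nat.one_le_iff_ne_zero.2 (Nat.choose_pos hsd).ne'
  have h2s : (1:ℝ) ≤ (2:ℝ) ^ s := one_le_pow₀ (by norm_num)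
  have hM1 : (1:ℝ) ≤ 2 ^ s * (d.choose s : ℝ) := by nlinarith
  have hM0 : (0:ℝ) < 2 ^ s * (d.choose s : ℝ) := by linarith
  have ha : (0:ℝ) < 2 * (s:ℝ) + 1 := by linarith
  have he : (2:ℝ) ≤ Real.exp 1 := by
    have := Real.add_one_le_exp 1
    linarith
  have he3 : (8:ℝ) ≤ Real.exp 1 ^ 3 := by
    calc (8:ℝ) = 2 ^ 3 := by norm_num
      _ ≤ Real.exp 1 ^ 3 := pow_le_pow_left₀ (by norm_num) he 3
  have hstep : 2 * (s:ℝ) + 1 ≤ Real.exp 1 ^ 3 * (s:ℝ) ^ 3 / 27 := by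
    have hs2 : (9:ℝ) ≤ (s:ℝ)^2 := by nlinarith
    have hss : 9*(s:ℝ) ≤ (s:ℝ)^3 := by nlinarith
    have hc3 : (0:ℝ) ≤ (s:ℝ)^3 := by positivity
    have hmul : 8 * (s:ℝ)^3 ≤ Real.exp 1 ^ 3 * (s:ℝ)^3 :=
      mul_le_mul_of_nonneg_right he3 hc3
    linarith
  have hlog : Real.log (2 * (s:ℝ) + 1) ≤
      Real.log (Real.exp 1 ^ 3 * (s:ℝ) ^ 3 / 27) :=
    Real.log_le_log ha hstep
  have h1 : (n:ℝ) * Real.log (2 * (s:ℝ) + 1) + Real.log 2 ≤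
      (1 / 2) * Real.log (2 ^ s * (d.choose s : ℝ)) := by
    refine le_trans ?_ hbound
    have := mul_le_mul_of_nonneg_left hlog (Nat.cast_nonneg n)
    linarith
  have h2 := Real.exp_le_exp.2 h1
  rw [Real.exp_add, ← Real.log_pow, Real.exp_log (pow_pos ha n),
    Real.exp_log (by norm_num : (0:ℝ) < 2)] at h2
  have h3 : Real.exp ((1 / 2) * Real.log (2 ^ s * (d.choose s : ℝ)))
      = (2 ^ s * (d.choose s : ℝ)) ^ ((1:ℝ)/2) := by
    rw [Real.rpow_def_of_pos hM0, mul_comm]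
  have h4 : (2 ^ s * (d.choose s : ℝ)) ^ ((1:ℝ)/2) ≤ 2 ^ s * (d.choose s : ℝ) := by
    nth_rewrite 2 [← Real.rpow_one (2 ^ s * (d.choose s : ℝ))]
    exact Real.rpow_le_rpow_of_exponent_le hM1 (by norm_num)
  rw [h3] at h2
  have hfinal : (2:ℝ) * (2 * (s:ℝ) + 1) ^ n ≤ 2 ^ s * (d.choose s : ℝ) := by
    nlinarith
  exact_mod_cast hfinal
instance twoPointEntry_prob (n : ℕ) : IsProbabilityMeasure (twoPointEntry n) := by
  constructor
  rw [twoPointEntry]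
  simp
  rw [ENNReal.inv_two_add_inv_two]

theorem noiseless_standard_cs_lower_bound
    (n d s : ℕ) (hn : 1 ≤ n) (hs3 : 3 ≤ s) (hsd : s ≤ d)
    (hbound : (n : ℝ) * Real.log (Real.exp 1 ^ 3 * (s : ℝ) ^ 3 / 27) + Real.log 2 ≤
      (1 / 2) * Real.log (2 ^ s * (d.choose s : ℝ)))
    (est : (Fin n → Fin d → ℝ) × (Fin n → ℝ) → (Fin d → ℝ))
    (hest : Measurable est) :
    (1 / 2 : ℝ≥0∞) ≤
      ((uniformOn (F2 d s)).prod
          (Measure.pi fun _ : Fin n => Measure.pi fun _ : Fin d => twoPointEntry n))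
        {ω : (Fin d → ℝ) × (Fin n → Fin d → ℝ) |
          est (ω.2, fun i => ∑ j, ω.2 i j * ω.1 j) ≠ ω.1} := by
  classical
  set μ := uniformOn (F2 d s) with hμ
  set ν := Measure.pi fun _ : Fin n => Measure.pi fun _ : Fin d => twoPointEntry n
    with hνdef
  haveI : IsProbabilityMeasure μ :=
    uniformOn_isProbabilityMeasure (F2_finite d s) (F2_nonempty hsd)
  have hF2meas : MeasurableSet (F2 d s) := (F2_finite d s).measurableSet
  set Sgood : Set ((Fin d → ℝ) × (Fin n → Fin d → ℝ)) :=
    {ω | est (ω.2, fun i => ∑ j, ω.2 i j * ω.1 j) = ω.1} with hSdef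
  have hg : Measurable fun ω : (Fin d → ℝ) × (Fin n → Fin d → ℝ) =>
      est (ω.2, fun i => ∑ j, ω.2 i j * ω.1 j) := by
    apply hest.comp
    refine Measurable.prodMk measurable_snd ?_
    refine measurable_pi_lambda _ fun i => ?_
    refine Finset.measurable_sum _ fun j _ => ?_
    exact ((measurable_pi_apply j).comp ((measurable_pi_apply i).comp measurable_snd)).mul
      ((measurable_pi_apply j).comp measurable_fst)
  have hSgood : MeasurableSet Sgood := by
    have heq : Sgood = ⋂ k,
        {ω : (Fin d → ℝ) × (Fin n → Fin d → ℝ) |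
          est (ω.2, fun i => ∑ j, ω.2 i j * ω.1 j) k = ω.1 k} := by
      ext ω; simp [hSdef, funext_iff]
    rw [heq]
    exact MeasurableSet.iInter fun k =>
      measurableSet_eq_fun ((measurable_pi_apply k).comp hg)
        ((measurable_pi_apply k).comp measurable_fst)
  -- almost every X has two-point entries
  have hgood : ∀ᵐ X ∂ν, ∀ i j,
      X i j = -(1 / Real.sqrt n) ∨ X i j = 1 / Real.sqrt n := by
    rw [ae_all_iff]
    intro i
    rw [ae_all_iff]
    intro j
    rw [ae_iff]
    have hms : MeasurableSet {x : ℝ | x = -(1 / Real.sqrt n) ∨ x = 1 / Real.sqrt n} := by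
      have h1 : {x : ℝ | x = -(1 / Real.sqrt n) ∨ x = 1 / Real.sqrt n}
          = ({-(1 / Real.sqrt n), 1 / Real.sqrt n} : Set ℝ) := rfl
      rw [h1]
      exact ((Set.finite_singleton _).insert _).measurableSet
    have h0 : twoPointEntry n
        {x : ℝ | ¬ (x = -(1 / Real.sqrt n) ∨ x = 1 / Real.sqrt n)} = 0 := by
      have hc : {x : ℝ | ¬ (x = -(1 / Real.sqrt n) ∨ x = 1 / Real.sqrt n)}
          = {x : ℝ | x = -(1 / Real.sqrt n) ∨ x = 1 / Real.sqrt n}ᶜ := rfl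
      rw [hc, twoPointEntry]
      simp only [Measure.coe_add, Measure.coe_smul, Pi.add_apply, Pi.smul_apply,
        smul_eq_mul]
      rw [Measure.dirac_apply' _ hms.compl, Measure.dirac_apply' _ hms.compl]
      have hmem1 : (-(1 / Real.sqrt n)) ∈ {x : ℝ | x = -(1 / Real.sqrt n) ∨ x = 1 / Real.sqrt n} :=
        Or.inl rfl
      have hmem2 : (1 / Real.sqrt n) ∈ {x : ℝ | x = -(1 / Real.sqrt n) ∨ x = 1 / Real.sqrt n} :=
        Or.inr rfl
      rw [Set.indicator_of_notMem (by simpa using hmem1),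
        Set.indicator_of_notMem (by simpa using hmem2)]
      simp
    have h1 : (Measure.pi fun _ : Fin d => twoPointEntry n)
        {v : Fin d → ℝ | ¬ (v j = -(1 / Real.sqrt n) ∨ v j = 1 / Real.sqrt n)} = 0 := by
      have he : {v : Fin d → ℝ | ¬ (v j = -(1 / Real.sqrt n) ∨ v j = 1 / Real.sqrt n)}
          = Function.eval j ⁻¹' {x : ℝ | ¬ (x = -(1 / Real.sqrt n) ∨ x = 1 / Real.sqrt n)} :=
        rfl
      rw [he]
      exact Measure.pi_eval_preimage_null _ h0
    have h2 : {X : Fin n → Fin d → ℝ |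
        ¬ (X i j = -(1 / Real.sqrt n) ∨ X i j = 1 / Real.sqrt n)}
        = Function.eval i ⁻¹'
          {v : Fin d → ℝ | ¬ (v j = -(1 / Real.sqrt n) ∨ v j = 1 / Real.sqrt n)} := rfl
    rw [hνdef, h2]
    exact Measure.pi_eval_preimage_null _ h1
  -- per-X bound
  have hkey : ∀ X : Fin n → Fin d → ℝ,
      (∀ i j, X i j = -(1 / Real.sqrt n) ∨ X i j = 1 / Real.sqrt n) →
      μ ((fun β => (β, X)) ⁻¹' Sgood) ≤ 1 / 2 := by
    intro X hX
    have hpre : (fun β => (β, X)) ⁻¹' Sgood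
        = {β | est (X, fun i => ∑ j, X i j * β j) = β} := rfl
    rw [hpre, hμ]
    unfold uniformOn
    rw [cond_apply hF2meas]
    have hcount := success_count_le n d s hn est X hX
    have hM := F2_count_ge d s
    have hnum := numeric_bound n d s hs3 hsd hbound
    set K : ℕ := (2 * s + 1) ^ n with hK
    set M : ℕ := 2 ^ s * d.choose s with hMdef
    have hMpos : 0 < M := Nat.mul_pos (Nat.two_pow_pos s) (Nat.choose_pos hsd)
    have hM0 : (M : ℝ≥0∞) ≠ 0 := by exact_mod_cast hMpos.ne'
    have hMtop : (M : ℝ≥0∞) ≠ ⊤ := ENNReal.natCast_ne_top M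
    have h2K : (K : ℝ≥0∞) * 2 ≤ (M : ℝ≥0∞) := by
      have : ((2 * K : ℕ) : ℝ≥0∞) ≤ (M : ℝ≥0∞) := by exact_mod_cast hnum
      push_cast at this
      rw [mul_comm]
      exact this
    have hKle : (K : ℝ≥0∞) ≤ (M : ℝ≥0∞) * (1 / 2) := by
      rw [mul_one_div]
      exact (ENNReal.le_div_iff_mul_le (Or.inl two_ne_zero)
        (Or.inl ENNReal.ofNat_ne_top)).2 h2K
    calc (Measure.count (F2 d s))⁻¹
          * Measure.count (F2 d s ∩ {β | est (X, fun i => ∑ j, X i j * β j) = β})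
        ≤ ((M : ℕ) : ℝ≥0∞)⁻¹ * ((K : ℕ) : ℝ≥0∞) :=
          mul_le_mul' (ENNReal.inv_le_inv.2 hM) hcount
      _ ≤ ((M : ℕ) : ℝ≥0∞)⁻¹ * (((M : ℕ) : ℝ≥0∞) * (1 / 2)) := mul_le_mul' le_rfl hKle
      _ = 1 / 2 := by rw [← mul_assoc, ENNReal.inv_mul_cancel hM0 hMtop, one_mul]
  have haebound : ∀ᵐ X ∂ν, μ ((fun β => (β, X)) ⁻¹' Sgood) ≤ 1 / 2 :=
    hgood.mono hkey
  have hmain : (μ.prod ν) Sgood ≤ 1 / 2 := by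
    rw [Measure.prod_apply_symm hSgood]
    calc ∫⁻ X, μ ((fun β => (β, X)) ⁻¹' Sgood) ∂ν
        ≤ ∫⁻ _, (1 / 2 : ℝ≥0∞) ∂ν := lintegral_mono_ae haebound
      _ = 1 / 2 := by rw [lintegral_const, measure_univ, mul_one]
  have hcomp : {ω : (Fin d → ℝ) × (Fin n → Fin d → ℝ) |
      est (ω.2, fun i => ∑ j, ω.2 i j * ω.1 j) ≠ ω.1} = Sgoodᶜ := rfl
  rw [hcomp, measure_compl hSgood (measure_ne_top _ _), measure_univ]
  have hfin := tsub_le_tsub_left hmain (1 : ℝ≥0∞)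
  have h12 : (1 : ℝ≥0∞) - 1 / 2 = 1 / 2 := ENNReal.sub_half ENNReal.one_ne_top
  rw [h12] at hfin
  exact hfin
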